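/- Let R be a Bézout domain, W ∈ R with W ≠ 0, and let S be a submonoid of R such that IsCoprime s W for every s ∈ S. If x, y are elements of the localization of R at S satisfying x·y = algebraMap R (Localization S) W, then there exist v₁, u₁ ∈ R with u₁·v₁ = W and a unit γ of the localization such that x = γ · algebraMap R (Localization S) v₁ (and consequently y = γ⁻¹ · algebraMap R (Localization S) u₁). In other words, every two-step factorization of the image of W in the localization arises, up to a unit, from a two-step factorization of W in R. -/

import Mathlib

/-- Let `R` be a Bézout domain, `W ≠ 0`, and `S` a submonoid of `R` all of
whose elements are coprime to `W`. Then every two-step factorization `x * y = W` of the image of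
`W` in the localization `R_S` arises, up to a unit of `R_S`, from a two-step factorization
`u₁ * v₁ = W` in `R`. -/
theorem localization_factorization_lifts
    {R : Type*} [CommRing R] [IsDomain R] [IsBezout R]
    (W : R) (hW : W ≠ 0) (S : Submonoid R) (hS : ∀ s ∈ S, IsCoprime s W)
    (x y : Localization S)
    (hxy : x * y = algebraMap R (Localization S) W) :
    ∃ (v₁ u₁ : R) (γ : (Localization S)ˣ),
      u₁ * v₁ = W ∧
      x = (γ : Localization S) * algebraMap R (Localization S) v₁ ∧
      y = ((γ⁻¹ : (Localization S)ˣ) : Localization S) * algebraMap R (Localization S) u₁ := by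
  set f := algebraMap R (Localization S) with hfdef
  by_cases h0 : (0 : R) ∈ S
  · haveI : Subsingleton (Localization S) := IsLocalization.subsingleton h0
    exact ⟨1, W, 1, mul_one W, Subsingleton.elim _ _, Subsingleton.elim _ _⟩
  · have hSle : S ≤ nonZeroDivisors R :=
      le_nonZeroDivisors_of_noZeroDivisors h0
    have hinj : Function.Injective f := IsLocalization.injective (Localization S) hSle
    obtain ⟨⟨a, s⟩, hx⟩ : ∃ p : R × S, IsLocalization.mk' (Localization S) p.1 p.2 = x :=
      IsLocalization.mk'_surjective S x
    obtain ⟨⟨b, t⟩, hy⟩ : ∃ p : R × S, IsLocalization.mk' (Localization S) p.1 p.2 = y :=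
      IsLocalization.mk'_surjective S y
    have hxs : x * f (s : R) = f a := by
      rw [← hx]; exact IsLocalization.mk'_spec (Localization S) a s
    have hyt : y * f (t : R) = f b := by
      rw [← hy]; exact IsLocalization.mk'_spec (Localization S) b t
    have key : a * b = W * ((s : R) * (t : R)) := by
      apply hinj
      rw [map_mul, ← hxs, ← hyt, map_mul, map_mul, ← hxy]
      ring
    -- Bézout: d = gcd a W
    set d := IsBezout.gcd a W with hd
    obtain ⟨a', ha'⟩ := IsBezout.gcd_dvd_left a W
    obtain ⟨w', hw'⟩ := IsBezout.gcd_dvd_right a W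
    obtain ⟨u, v, huv⟩ := IsBezout.gcd_eq_sum a W
    have hdne : d ≠ 0 := by
      intro h
      apply hW
      rw [hw', ← hd, h, zero_mul]
    have hcop : IsCoprime a' w' := by
      refine ⟨u, v, ?_⟩
      apply mul_left_cancel₀ hdne
      rw [mul_one]
      calc d * (u * a' + v * w') = u * (d * a') + v * (d * w') := by ring
        _ = u * a + v * W := by rw [← ha', ← hw']
        _ = d := huv
    have key2 : a' * b = w' * ((s : R) * (t : R)) := by
      apply mul_left_cancel₀ hdne
      calc d * (a' * b) = (d * a') * b := by ring
        _ = a * b := by rw [← ha']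
        _ = W * ((s : R) * (t : R)) := key
        _ = d * (w' * ((s : R) * (t : R))) := by rw [hw']; ring
    have hdvd : a' ∣ (s : R) * (t : R) := by
      apply hcop.dvd_of_dvd_mul_left
      exact ⟨b, key2.symm⟩
    obtain ⟨c, hc⟩ := hdvd
    have hst_unit : IsUnit (f ((s : R) * (t : R))) := by
      have := IsLocalization.map_units (Localization S) (s * t)
      simpa using this
    have ha'_unit : IsUnit (f a') := by
      apply isUnit_of_mul_isUnit_left (y := f c)
      rw [← map_mul, ← hc]; exact hst_unit
    have hs_unit : IsUnit (f (s : R)) := IsLocalization.map_units (Localization S) s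
    have ht_unit : IsUnit (f (t : R)) := IsLocalization.map_units (Localization S) t
    refine ⟨d, w', ha'_unit.unit * hs_unit.unit⁻¹, ?_, ?_, ?_⟩
    · rw [hw']; ring
    · apply hs_unit.mul_right_cancel
      rw [hxs]
      push_cast
      rw [ha'_unit.unit_spec]
      calc f a = f d * f a' := by rw [← map_mul, ← ha']
        _ = f a' * (f d * (↑hs_unit.unit⁻¹ * f (s : R))) := by
            rw [hs_unit.val_inv_mul, mul_one]; ring
        _ = f a' * ↑hs_unit.unit⁻¹ * f d * f (s : R) := by ring
    · apply (ht_unit.mul ha'_unit).mul_right_cancel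
      rw [mul_inv_rev, inv_inv]
      push_cast
      rw [hs_unit.unit_spec]
      calc y * (f (t : R) * f a') = (y * f (t : R)) * f a' := by ring
        _ = f b * f a' := by rw [hyt]
        _ = f (w' * ((s : R) * (t : R))) := by rw [← map_mul, mul_comm b a', key2]
        _ = f (s : R) * f w' * f (t : R) * ((↑ha'_unit.unit⁻¹ : Localization S) * f a') := by
            rw [ha'_unit.val_inv_mul, mul_one, map_mul, map_mul]; ring
        _ = f (s : R) * ↑ha'_unit.unit⁻¹ * f w' * (f (t : R) * f a') := by ring
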